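/- Let β > 0 and let (d_j)_{j≥0} and (g_j)_{j≥0} be nonnegative real sequences satisfying d_{j+1} ≤ d_j − g_j²/β for all j ≥ 0, g_j ≥ d_j for all j ≥ 0, and additionally d_0 ≤ β. Then for every j ≥ 1: d_j ≤ β/(j+1); moreover, for integers 0 ≤ l < j: if l < ⌊j/2 + 1⌋ then min{g_l, g_{l+1}, …, g_j} ≤ 2β/(j+1), and if ⌊j/2 + 1⌋ ≤ l < j then min{g_l, …, g_j} ≤ β/√((l+2)·(j−l)). -/
import Mathlib


private lemma sq_le_imp {x y : ℝ} (hy : 0 ≤ y) (h : x^2 ≤ y^2) : x ≤ y := by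
  nlinarith [sq_nonneg (x - y), sq_nonneg (x + y)]

/-- Real-sequence lemma (Proposition 2.4 variant, non-strict version with
`d 0 ≤ β`): if `d (j+1) ≤ d j - (g j)²/β`, `g j ≥ d j` and `d 0 ≤ β`, then
`d j ≤ β/(j+1)` for `j ≥ 1`, and the minimum of `g` over any window `{l, …, j}`
obeys the stated bounds. `⌊j/2 + 1⌋` is natural-number division `j/2 + 1`. -/
theorem stmt_9 (β : ℝ) (hβ : 0 < β) (d g : ℕ → ℝ)
    (hd : ∀ j, 0 ≤ d j) (hg : ∀ j, 0 ≤ g j)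
    (hrec : ∀ j, d (j + 1) ≤ d j - (g j) ^ 2 / β)
    (hdom : ∀ j, d j ≤ g j)
    (hd0 : d 0 ≤ β) :
    (∀ j : ℕ, 1 ≤ j → d j ≤ β / (j + 1)) ∧
    (∀ l j : ℕ, (h : l < j) →
      (l < j / 2 + 1 →
        (Finset.Icc l j).inf' (Finset.nonempty_Icc.mpr h.le) g ≤ 2 * β / (j + 1)) ∧
      (j / 2 + 1 ≤ l →
        (Finset.Icc l j).inf' (Finset.nonempty_Icc.mpr h.le) g ≤
          β / Real.sqrt (((l : ℝ) + 2) * ((j : ℝ) - l)))) := by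
  -- step recurrence with d in place of g
  have step : ∀ j, d (j + 1) ≤ d j - (d j) ^ 2 / β := by
    intro j
    refine (hrec j).trans ?_
    have h1 : (d j) ^ 2 ≤ (g j) ^ 2 := pow_le_pow_left₀ (hd j) (hdom j) 2
    gcongr
  have step' : ∀ j, d (j + 1) * β ≤ d j * β - (d j) ^ 2 := by
    intro j
    have h := step j
    have hcan : (d j) ^ 2 / β * β = (d j) ^ 2 := div_mul_cancel₀ _ hβ.ne'
    nlinarith [mul_le_mul_of_nonneg_right h hβ.le]
  -- Part 1
  have part1 : ∀ j : ℕ, 1 ≤ j → d j ≤ β / (j + 1) := by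
    intro j hj
    induction j, hj using Nat.le_induction with
    | base =>
      have h := step' 0
      push_cast
      rw [le_div_iff₀ (by norm_num : (0:ℝ) < 1 + 1)]
      nlinarith [sq_nonneg (d 0 - β / 2), hd 0]
    | succ j hj ih =>
      have h := step' j
      have hn : (1 : ℝ) ≤ (j : ℝ) := by exact_mod_cast hj
      have hx : 0 ≤ d j := hd j
      have hxc : d j * ((j : ℝ) + 1) ≤ β := by
        rw [le_div_iff₀ (by positivity)] at ih; linarith
      have hj2 : (0:ℝ) ≤ (j : ℝ) + 2 := by positivity
      have key : (d j * β - (d j) ^ 2) * ((j : ℝ) + 2) ≤ β ^ 2 := by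
        nlinarith [sq_nonneg (d j * ((j:ℝ)+1) - β), mul_nonneg hx (sub_nonneg.2 hn),
          mul_nonneg (mul_nonneg hx hx) (sub_nonneg.2 hn),
          mul_nonneg (sub_nonneg.2 hxc) (sub_nonneg.2 hn),
          mul_nonneg (mul_nonneg (sub_nonneg.2 hxc) hx) (sub_nonneg.2 hn)]
      push_cast
      rw [le_div_iff₀ (by positivity)]
      nlinarith [mul_le_mul_of_nonneg_right h hj2]
  -- summation lemma
  have sumlem : ∀ a b : ℕ, a ≤ b →
      d (b + 1) + (∑ i ∈ Finset.Icc a b, (g i) ^ 2) / β ≤ d a := by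
    intro a b hab
    induction b, hab using Nat.le_induction with
    | base =>
      simp only [Finset.Icc_self, Finset.sum_singleton]
      linarith [hrec a]
    | succ b hab ih =>
      rw [Finset.sum_Icc_succ_top (by omega), add_div]
      linarith [hrec (b + 1)]
  -- window bound
  have window : ∀ a j : ℕ, ∀ ha : a ≤ j,
      ((j : ℝ) - a + 1) * ((Finset.Icc a j).inf' (Finset.nonempty_Icc.mpr ha) g) ^ 2
        ≤ β * d a := by
    intro a j ha
    set m := (Finset.Icc a j).inf' (Finset.nonempty_Icc.mpr ha) g with hm
    have hm0 : 0 ≤ m := Finset.le_inf' _ _ fun i _ => hg i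
    have hsum : ((j : ℝ) - a + 1) * m ^ 2 ≤ ∑ i ∈ Finset.Icc a j, (g i) ^ 2 := by
      have : ∑ i ∈ Finset.Icc a j, m ^ 2 ≤ ∑ i ∈ Finset.Icc a j, (g i) ^ 2 :=
        Finset.sum_le_sum fun i hi => pow_le_pow_left₀ hm0 (Finset.inf'_le g hi) 2
      rw [Finset.sum_const, Nat.card_Icc] at this
      have hc : ((j + 1 - a : ℕ) : ℝ) = (j : ℝ) - a + 1 := by
        rw [Nat.cast_sub (by omega)]; push_cast; ring
      rw [nsmul_eq_mul, hc] at this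
      exact this
    have h1 := sumlem a j ha
    have h2 := hd (j + 1)
    have h3 : (∑ i ∈ Finset.Icc a j, (g i) ^ 2) / β ≤ d a := by linarith
    rw [div_le_iff₀ hβ] at h3
    nlinarith
  -- d bound including a = 0
  have dbound : ∀ a : ℕ, d a ≤ β / (a + 1) := by
    intro a
    rcases Nat.eq_zero_or_pos a with h | h
    · subst h; simpa using hd0
    · exact part1 a h
  refine ⟨part1, fun l j hlj => ⟨?_, ?_⟩⟩
  · -- l < j/2 + 1
    intro hl
    set a := j / 2 with hadef
    have ha : a ≤ j := Nat.div_le_self j 2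
    have hla : l ≤ a := by omega
    -- min over Icc l j ≤ min over Icc a j
    obtain ⟨i, hi, hie⟩ := Finset.exists_mem_eq_inf' (Finset.nonempty_Icc.mpr ha) g
    have hmono : (Finset.Icc l j).inf' (Finset.nonempty_Icc.mpr hlj.le) g ≤
        (Finset.Icc a j).inf' (Finset.nonempty_Icc.mpr ha) g := by
      rw [hie]
      exact Finset.inf'_le g (Finset.mem_Icc.mpr ⟨le_trans hla (Finset.mem_Icc.mp hi).1,
        (Finset.mem_Icc.mp hi).2⟩)
    refine hmono.trans ?_
    set m := (Finset.Icc a j).inf' (Finset.nonempty_Icc.mpr ha) g with hm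
    have hm0 : 0 ≤ m := Finset.le_inf' _ _ fun i _ => hg i
    have hw := window a j ha
    have hda : d a ≤ β / ((a : ℝ) + 1) := dbound a
    have hkey : ((j : ℝ) - a + 1) * m ^ 2 * ((a : ℝ) + 1) ≤ β ^ 2 := by
      have h1 : β * d a * ((a : ℝ) + 1) ≤ β ^ 2 := by
        rw [le_div_iff₀ (by positivity)] at hda
        nlinarith
      nlinarith [mul_le_mul_of_nonneg_right hw (show (0:ℝ) ≤ (a:ℝ)+1 by positivity)]
    -- nat facts about a = j/2
    have hnat1 : (j : ℝ) - 1 ≤ 2 * a := by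
      have : j ≤ 2 * a + 1 := by omega
      have := (Nat.cast_le (α := ℝ)).2 this
      push_cast at this; linarith
    have hnat2 : (2 * a : ℝ) ≤ j := by
      have : 2 * a ≤ j := by omega
      exact_mod_cast this
    have hquad : ((j : ℝ) + 1) ^ 2 ≤ 4 * ((a : ℝ) + 1) * ((j : ℝ) - a + 1) := by
      nlinarith [mul_nonneg (sub_nonneg.2 hnat1) (sub_nonneg.2 hnat2)]
    refine sq_le_imp (by positivity) ?_
    rw [div_pow]
    rw [le_div_iff₀ (by positivity)]
    have hja : (0:ℝ) ≤ (j : ℝ) - a := by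
      have : a ≤ j := ha
      have := (Nat.cast_le (α := ℝ)).2 this
      linarith
    nlinarith [mul_nonneg (mul_nonneg (sq_nonneg m) hja) (show (0:ℝ) ≤ (a:ℝ) by positivity),
      sq_nonneg m, mul_nonneg (sq_nonneg m) hja]
  · -- j/2 + 1 ≤ l
    intro hl
    have hl1 : 1 ≤ l := by omega
    have hj2l : (j : ℝ) ≤ 2 * l - 1 := by
      have : j ≤ 2 * l - 1 := by omega
      have h2 : (j:ℝ) ≤ ((2*l - 1 : ℕ) : ℝ) := by exact_mod_cast this
      rw [Nat.cast_sub (by omega)] at h2; push_cast at h2; linarith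
    set m := (Finset.Icc l j).inf' (Finset.nonempty_Icc.mpr hlj.le) g with hm
    have hm0 : 0 ≤ m := Finset.le_inf' _ _ fun i _ => hg i
    have hw := window l j hlj.le
    have hdl : d l ≤ β / ((l : ℝ) + 1) := dbound l
    have hkey : ((j : ℝ) - l + 1) * m ^ 2 * ((l : ℝ) + 1) ≤ β ^ 2 := by
      have h1 : β * d l * ((l : ℝ) + 1) ≤ β ^ 2 := by
        rw [le_div_iff₀ (by positivity)] at hdl
        nlinarith
      nlinarith [mul_le_mul_of_nonneg_right hw (show (0:ℝ) ≤ (l:ℝ)+1 by positivity)]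
    have hjl : (l : ℝ) < j := by exact_mod_cast hlj
    have hX : (0:ℝ) < ((l : ℝ) + 2) * ((j : ℝ) - l) := by
      apply mul_pos <;> [positivity; linarith]
    have hXle : ((l : ℝ) + 2) * ((j : ℝ) - l) ≤ ((j : ℝ) - l + 1) * ((l : ℝ) + 1) := by
      have hexp : ((l:ℝ)+2)*((j:ℝ)-l) =
          ((j:ℝ)-l+1)*((l:ℝ)+1) + ((j:ℝ) - 2*l - 1) := by ring
      rw [hexp]; linarith
    have hmX : m ^ 2 * (((l : ℝ) + 2) * ((j : ℝ) - l)) ≤ β ^ 2 := by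
      have e1 : m ^ 2 * (((l:ℝ)+2)*((j:ℝ)-l)) ≤ m ^ 2 * (((j:ℝ)-l+1)*((l:ℝ)+1)) :=
        mul_le_mul_of_nonneg_left hXle (sq_nonneg m)
      have e2 : m ^ 2 * (((j:ℝ)-l+1)*((l:ℝ)+1)) = ((j:ℝ)-l+1) * m^2 * ((l:ℝ)+1) := by
        ring
      linarith [hkey]
    have hsq : Real.sqrt (((l : ℝ) + 2) * ((j : ℝ) - l)) > 0 := Real.sqrt_pos.2 hX
    rw [le_div_iff₀ hsq]
    refine sq_le_imp hβ.le ?_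
    rw [mul_pow, Real.sq_sqrt hX.le]
    exact hmX
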